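/- Let P be a Φ-reduction for a QBF Φ = ∀X∃Y∀Z φ with φ in DNF. If Φ is true, then P is super-coherent: for every set F ⊆ U of facts, AS(P ∪ F) ≠ ∅. -/

import Mathlib

structure Rule (A : Type) where
  head : Set A
  pos : Set A
  neg : Set A

abbrev Program (A : Type) := Set (Rule A)

def satRule {A : Type} (I : Set A) (r : Rule A) : Prop :=
  r.pos ⊆ I → r.neg ∩ I = ∅ → (r.head ∩ I).Nonempty

def isModel {A : Type} (P : Program A) (I : Set A) : Prop := ∀ r ∈ P, satRule I r

def reduct {A : Type} (P : Program A) (K : Set A) : Program A :=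
  {r' | ∃ r ∈ P, r.neg ∩ K = ∅ ∧ r' = ⟨r.head, r.pos, ∅⟩}

def isAnswerSet {A : Type} (P : Program A) (M : Set A) : Prop :=
  isModel (reduct P M) M ∧ ∀ N ⊆ M, isModel (reduct P M) N → N = M

def factsOf {A : Type} (F : Set A) : Program A := {r | ∃ a ∈ F, r = ⟨{a}, ∅, ∅⟩}

def superCoherent {A : Type} (P : Program A) : Prop :=
  ∀ F : Set A, ∃ M, isAnswerSet (P ∪ factsOf F) M

def atomsOf {A : Type} (P : Program A) : Set A :=
  ⋃ r ∈ P, (r.head ∪ r.pos ∪ r.neg)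

def Uall {A : Type} (X Y Z : Set A) (bar : A → A) (u v w : A) : Set A :=
  X ∪ Y ∪ Z ∪ bar '' X ∪ bar '' Y ∪ bar '' Z ∪ {u, v, w}

def Mmod {A : Type} (X Y Z : Set A) (bar : A → A) (u v : A) (I J : Set A) : Set A :=
  I ∪ bar '' (X \ I) ∪ J ∪ bar '' (Y \ J) ∪ Z ∪ bar '' Z ∪ {u, v}

def Mmod' {A : Type} (X Y Z : Set A) (bar : A → A) (v w : A) (I J : Set A) : Set A :=
  I ∪ bar '' (X \ I) ∪ J ∪ bar '' (Y \ J) ∪ Z ∪ bar '' Z ∪ {v, w}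

def Omod {A : Type} (X : Set A) (bar : A → A) (I : Set A) : Set A := I ∪ bar '' (X \ I)

def Nmod {A : Type} (X Y Z : Set A) (bar : A → A) (v : A) (I J K : Set A) : Set A :=
  I ∪ bar '' (X \ I) ∪ J ∪ bar '' (Y \ J) ∪ K ∪ bar '' (Z \ K) ∪ {v}

lemma reduct_union' {A : Type} (P Q : Program A) (K : Set A) :
    reduct (P ∪ Q) K = reduct P K ∪ reduct Q K := by
  ext r'
  constructor
  · rintro ⟨r, hr | hr, hneg, rfl⟩
    · exact Or.inl ⟨r, hr, hneg, rfl⟩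
    · exact Or.inr ⟨r, hr, hneg, rfl⟩
  · rintro (⟨r, hr, hneg, rfl⟩ | ⟨r, hr, hneg, rfl⟩)
    · exact ⟨r, Or.inl hr, hneg, rfl⟩
    · exact ⟨r, Or.inr hr, hneg, rfl⟩

lemma reduct_facts' {A : Type} (F K : Set A) : reduct (factsOf F) K = factsOf F := by
  ext r'
  constructor
  · rintro ⟨r, ⟨a, ha, rfl⟩, -, rfl⟩; exact ⟨a, ha, rfl⟩
  · rintro ⟨a, ha, rfl⟩
    exact ⟨⟨{a}, ∅, ∅⟩, ⟨a, ha, rfl⟩, by simp, rfl⟩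

lemma isModel_union' {A : Type} {P Q : Program A} {N : Set A} :
    isModel (P ∪ Q) N ↔ isModel P N ∧ isModel Q N := by
  constructor
  · intro h; exact ⟨fun r hr => h r (Or.inl hr), fun r hr => h r (Or.inr hr)⟩
  · rintro ⟨h1, h2⟩ r (hr | hr)
    exacts [h1 r hr, h2 r hr]

lemma isModel_facts' {A : Type} {F N : Set A} : isModel (factsOf F) N ↔ F ⊆ N := by
  constructor
  · intro h a ha
    have hs := h ⟨{a}, ∅, ∅⟩ ⟨a, ha, rfl⟩ (Set.empty_subset N) (Set.empty_inter N)
    simpa [Set.singleton_inter_nonempty] using hs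
  · rintro hF r ⟨a, ha, rfl⟩ _ _
    simp only [Set.singleton_inter_nonempty]
    exact hF ha

lemma answerSet_of {A : Type} (P : Program A) (F M : Set A)
    (hFM : F ⊆ M)
    (hmod : isModel (reduct P M) M)
    (hmin : ∀ N ⊆ M, isModel (reduct P M) N → F ⊆ N → N = M) :
    isAnswerSet (P ∪ factsOf F) M := by
  constructor
  · rw [reduct_union', reduct_facts']
    exact isModel_union'.mpr ⟨hmod, isModel_facts'.mpr hFM⟩
  · intro N hN hNmod
    rw [reduct_union', reduct_facts'] at hNmod
    obtain ⟨h1, h2⟩ := isModel_union'.mp hNmod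
    exact hmin N hN h1 (isModel_facts'.mp h2)
/-- If Φ = ∀X∃Y∀Z φ is true, then any Φ-reduction P is super-coherent:
for every F ⊆ U, P ∪ F has an answer set. -/
theorem phiReduction_true_superCoherent {A : Type}
    (X Y Z : Set A) (bar : A → A) (u v w : A) (phi : Set A → Prop) (P : Program A)
    (hXne : X.Nonempty) (hYne : Y.Nonempty) (hZne : Z.Nonempty)
    (hXY : Disjoint X Y) (hXZ : Disjoint X Z) (hYZ : Disjoint Y Z)
    (hbarinj : Function.Injective bar)
    (hbarfresh : Disjoint (bar '' (X ∪ Y ∪ Z)) (X ∪ Y ∪ Z))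
    (huv : u ≠ v) (huw : u ≠ w) (hvw : v ≠ w)
    (hufresh : u ∉ X ∪ Y ∪ Z ∪ bar '' (X ∪ Y ∪ Z))
    (hvfresh : v ∉ X ∪ Y ∪ Z ∪ bar '' (X ∪ Y ∪ Z))
    (hwfresh : w ∉ X ∪ Y ∪ Z ∪ bar '' (X ∪ Y ∪ Z))
    (hatoms : atomsOf P = Uall X Y Z bar u v w)
    (hmodels : ∀ M ⊆ Uall X Y Z bar u v w, (isModel P M ↔
       (M = Uall X Y Z bar u v w ∨ ∃ I, I ⊆ X ∧ ∃ J, J ⊆ Y ∧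
         (M = Mmod X Y Z bar u v I J ∨ M = Mmod' X Y Z bar v w I J))))
    (hredM : ∀ I, I ⊆ X → ∀ J, J ⊆ Y → ∀ N ⊆ Mmod X Y Z bar u v I J,
       (isModel (reduct P (Mmod X Y Z bar u v I J)) N ↔
         (N = Mmod X Y Z bar u v I J ∨ N = Omod X bar I)))
    (hredM' : ∀ I, I ⊆ X → ∀ J, J ⊆ Y → ∀ N ⊆ Mmod' X Y Z bar v w I J,
       (isModel (reduct P (Mmod' X Y Z bar v w I J)) N ↔
         (N = Mmod' X Y Z bar v w I J ∨
           ∃ K, K ⊆ Z ∧ ¬ phi (I ∪ J ∪ K) ∧ N = Nmod X Y Z bar v I J K)))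
    (hredU : ∀ N ⊆ Uall X Y Z bar u v w,
       (isModel (reduct P (Uall X Y Z bar u v w)) N ↔
         (N = Uall X Y Z bar u v w ∨ ∃ I, I ⊆ X ∧ ∃ J, J ⊆ Y ∧
           (N = Mmod X Y Z bar u v I J ∨ N = Mmod' X Y Z bar v w I J ∨ N = Omod X bar I ∨
             ∃ K, K ⊆ Z ∧ ¬ phi (I ∪ J ∪ K) ∧ N = Nmod X Y Z bar v I J K))))
    (htrue : ∀ I, I ⊆ X → ∃ J, J ⊆ Y ∧ ∀ K, K ⊆ Z → phi (I ∪ J ∪ K)) :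
    (∀ F ⊆ Uall X Y Z bar u v w, ∃ M, isAnswerSet (P ∪ factsOf F) M) ∧
      superCoherent P := by
  classical
  -- ## basic freshness helpers
  have hXin : ∀ {a : A}, a ∈ X → a ∈ X ∪ Y ∪ Z := fun ha => Or.inl (Or.inl ha)
  have hYin : ∀ {a : A}, a ∈ Y → a ∈ X ∪ Y ∪ Z := fun ha => Or.inl (Or.inr ha)
  have hZin : ∀ {a : A}, a ∈ Z → a ∈ X ∪ Y ∪ Z := fun ha => Or.inr ha
  have hbar_not : ∀ {S : Set A}, S ⊆ X ∪ Y ∪ Z → ∀ {a : A}, a ∈ X ∪ Y ∪ Z → a ∉ bar '' S := by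
    intro S hS a ha hmem
    exact Set.disjoint_left.mp hbarfresh (Set.image_mono (f := bar) hS hmem) ha
  have hb_mem : ∀ {x : A} {S : Set A}, bar x ∈ bar '' S → x ∈ S := by
    intro x S h
    obtain ⟨s, hs, he⟩ := h
    rwa [← hbarinj he]
  have hbF : ∀ {x : A}, x ∈ X ∪ Y ∪ Z → bar x ∉ X ∪ Y ∪ Z := by
    intro x hx hb
    exact Set.disjoint_left.mp hbarfresh ⟨x, hx, rfl⟩ hb
  have hu1 : u ∉ X ∪ Y ∪ Z := fun h => hufresh (Or.inl h)
  have hu2 : u ∉ bar '' (X ∪ Y ∪ Z) := fun h => hufresh (Or.inr h)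
  have hv1 : v ∉ X ∪ Y ∪ Z := fun h => hvfresh (Or.inl h)
  have hv2 : v ∉ bar '' (X ∪ Y ∪ Z) := fun h => hvfresh (Or.inr h)
  have hw1 : w ∉ X ∪ Y ∪ Z := fun h => hwfresh (Or.inl h)
  have hw2 : w ∉ bar '' (X ∪ Y ∪ Z) := fun h => hwfresh (Or.inr h)
  -- ## R auxiliary lemmas
  have hRaux : ∀ {R : Set A}, R ⊆ Z ∪ bar '' Z ∪ {u, v, w} → ∀ {a : A}, a ∈ X ∪ Y → a ∉ R := by
    intro R hR a ha haR
    have hXYZ : a ∈ X ∪ Y ∪ Z := Or.inl ha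
    rcases hR haR with (hz | hbz) | huvw
    · rcases ha with h | h
      · exact Set.disjoint_left.mp hXZ h hz
      · exact Set.disjoint_left.mp hYZ h hz
    · exact hbar_not (fun s hs => Or.inr hs) hXYZ hbz
    · simp only [Set.mem_insert_iff, Set.mem_singleton_iff] at huvw
      rcases huvw with rfl | rfl | rfl
      exacts [hu1 hXYZ, hv1 hXYZ, hw1 hXYZ]
  have hRaux' : ∀ {R : Set A}, R ⊆ Z ∪ bar '' Z ∪ {u, v, w} → ∀ {b : A}, b ∈ X ∪ Y →
      bar b ∉ R := by
    intro R hR b hb hbR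
    have hbXYZ : b ∈ X ∪ Y ∪ Z := Or.inl hb
    rcases hR hbR with (hz | hbz) | huvw
    · exact hbF hbXYZ (Or.inr hz)
    · have hbz' : b ∈ Z := hb_mem hbz
      rcases hb with h | h
      · exact Set.disjoint_left.mp hXZ h hbz'
      · exact Set.disjoint_left.mp hYZ h hbz'
    · simp only [Set.mem_insert_iff, Set.mem_singleton_iff] at huvw
      rcases huvw with he | he | he
      · exact hu2 (he ▸ ⟨b, hbXYZ, rfl⟩)
      · exact hv2 (he ▸ ⟨b, hbXYZ, rfl⟩)
      · exact hw2 (he ▸ ⟨b, hbXYZ, rfl⟩)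
  -- ## master membership lemmas for T = I ∪ (bar''(X\I) ∪ (J ∪ (bar''(Y\J) ∪ R)))
  have m1 : ∀ {I J R : Set A}, I ⊆ X → J ⊆ Y → R ⊆ Z ∪ bar '' Z ∪ {u, v, w} → ∀ {a : A}, a ∈ X →
      (a ∈ I ∪ (bar '' (X \ I) ∪ (J ∪ (bar '' (Y \ J) ∪ R))) ↔ a ∈ I) := by
    intro I J R hI hJ hR a ha
    constructor
    · rintro (h | h | h | h | h)
      · exact h
      · exact absurd h (hbar_not (fun s hs => hXin hs.1) (hXin ha))
      · exact absurd (hJ h) (Set.disjoint_left.mp hXY ha)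
      · exact absurd h (hbar_not (fun s hs => hYin hs.1) (hXin ha))
      · exact absurd h (hRaux hR (Or.inl ha))
    · exact fun h => Or.inl h
  have m2 : ∀ {I J R : Set A}, I ⊆ X → J ⊆ Y → R ⊆ Z ∪ bar '' Z ∪ {u, v, w} → ∀ {a : A}, a ∈ X →
      (bar a ∈ I ∪ (bar '' (X \ I) ∪ (J ∪ (bar '' (Y \ J) ∪ R))) ↔ a ∉ I) := by
    intro I J R hI hJ hR a ha
    constructor
    · rintro (h | h | h | h | h)
      · exact absurd (hXin (hI h)) (hbF (hXin ha))
      · exact (hb_mem h).2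
      · exact absurd (hYin (hJ h)) (hbF (hXin ha))
      · exact absurd (hXin ha) (fun _ => Set.disjoint_left.mp hXY ha (hb_mem h).1)
      · exact absurd h (hRaux' hR (Or.inl ha))
    · exact fun h => Or.inr (Or.inl ⟨a, ⟨ha, h⟩, rfl⟩)
  have m3 : ∀ {I J R : Set A}, I ⊆ X → J ⊆ Y → R ⊆ Z ∪ bar '' Z ∪ {u, v, w} → ∀ {a : A}, a ∈ Y →
      (a ∈ I ∪ (bar '' (X \ I) ∪ (J ∪ (bar '' (Y \ J) ∪ R))) ↔ a ∈ J) := by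
    intro I J R hI hJ hR a ha
    constructor
    · rintro (h | h | h | h | h)
      · exact absurd ha (Set.disjoint_left.mp hXY (hI h))
      · exact absurd h (hbar_not (fun s hs => hXin hs.1) (hYin ha))
      · exact h
      · exact absurd h (hbar_not (fun s hs => hYin hs.1) (hYin ha))
      · exact absurd h (hRaux hR (Or.inr ha))
    · exact fun h => Or.inr (Or.inr (Or.inl h))
  have m4 : ∀ {I J R : Set A}, I ⊆ X → J ⊆ Y → R ⊆ Z ∪ bar '' Z ∪ {u, v, w} → ∀ {a : A}, a ∈ Y →
      (bar a ∈ I ∪ (bar '' (X \ I) ∪ (J ∪ (bar '' (Y \ J) ∪ R))) ↔ a ∉ J) := by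
    intro I J R hI hJ hR a ha
    constructor
    · rintro (h | h | h | h | h)
      · exact absurd (hXin (hI h)) (hbF (hYin ha))
      · exact absurd ha (Set.disjoint_left.mp hXY (hb_mem h).1)
      · exact absurd (hYin (hJ h)) (hbF (hYin ha))
      · exact (hb_mem h).2
      · exact absurd h (hRaux' hR (Or.inr ha))
    · exact fun h => Or.inr (Or.inr (Or.inr (Or.inl ⟨a, ⟨ha, h⟩, rfl⟩)))
  have m5 : ∀ {I J R : Set A}, I ⊆ X → J ⊆ Y → ∀ {a : A}, a ∉ X → a ∉ Y →
      (∀ b ∈ X ∪ Y, a ≠ bar b) →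
      (a ∈ I ∪ (bar '' (X \ I) ∪ (J ∪ (bar '' (Y \ J) ∪ R))) ↔ a ∈ R) := by
    intro I J R hI hJ a haX haY hab
    constructor
    · rintro (h | h | h | h | h)
      · exact absurd (hI h) haX
      · obtain ⟨b, hb, he⟩ := h
        exact absurd he.symm (hab b (Or.inl hb.1))
      · exact absurd (hJ h) haY
      · obtain ⟨b, hb, he⟩ := h
        exact absurd he.symm (hab b (Or.inr hb.1))
      · exact h
    · exact fun h => Or.inr (Or.inr (Or.inr (Or.inr h)))
  -- specialized m5 variants
  have m5u : ∀ {I J R : Set A}, I ⊆ X → J ⊆ Y →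
      (u ∈ I ∪ (bar '' (X \ I) ∪ (J ∪ (bar '' (Y \ J) ∪ R))) ↔ u ∈ R) :=
    fun hI hJ => m5 hI hJ (fun h => hu1 (hXin h)) (fun h => hu1 (hYin h))
      (fun b hb he => hu2 (he ▸ ⟨b, Or.inl hb, rfl⟩))
  have m5v : ∀ {I J R : Set A}, I ⊆ X → J ⊆ Y →
      (v ∈ I ∪ (bar '' (X \ I) ∪ (J ∪ (bar '' (Y \ J) ∪ R))) ↔ v ∈ R) :=
    fun hI hJ => m5 hI hJ (fun h => hv1 (hXin h)) (fun h => hv1 (hYin h))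
      (fun b hb he => hv2 (he ▸ ⟨b, Or.inl hb, rfl⟩))
  have m5w : ∀ {I J R : Set A}, I ⊆ X → J ⊆ Y →
      (w ∈ I ∪ (bar '' (X \ I) ∪ (J ∪ (bar '' (Y \ J) ∪ R))) ↔ w ∈ R) :=
    fun hI hJ => m5 hI hJ (fun h => hw1 (hXin h)) (fun h => hw1 (hYin h))
      (fun b hb he => hw2 (he ▸ ⟨b, Or.inl hb, rfl⟩))
  have m5z : ∀ {I J R : Set A}, I ⊆ X → J ⊆ Y → ∀ {a : A}, a ∈ Z →
      (a ∈ I ∪ (bar '' (X \ I) ∪ (J ∪ (bar '' (Y \ J) ∪ R))) ↔ a ∈ R) := by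
    intro I J R hI hJ a ha
    exact m5 hI hJ (Set.disjoint_right.mp hXZ ha) (Set.disjoint_right.mp hYZ ha)
      (fun b hb he => hbF (Or.inl hb) (he ▸ hZin ha))
  have m5bz : ∀ {I J R : Set A}, I ⊆ X → J ⊆ Y → ∀ {a : A}, a ∈ Z →
      (bar a ∈ I ∪ (bar '' (X \ I) ∪ (J ∪ (bar '' (Y \ J) ∪ R))) ↔ bar a ∈ R) := by
    intro I J R hI hJ a ha
    refine m5 hI hJ (fun h => hbF (hZin ha) (hXin h)) (fun h => hbF (hZin ha) (hYin h)) ?_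
    intro b hb he
    have : a = b := hbarinj he
    subst this
    rcases hb with h | h
    · exact Set.disjoint_left.mp hXZ h ha
    · exact Set.disjoint_left.mp hYZ h ha
  -- ## model shape equalities
  have eqM : ∀ I J : Set A, Mmod X Y Z bar u v I J =
      I ∪ (bar '' (X \ I) ∪ (J ∪ (bar '' (Y \ J) ∪ (Z ∪ (bar '' Z ∪ ({u, v} : Set A)))))) := by
    intro I J; simp [Mmod, Set.union_assoc]
  have eqM' : ∀ I J : Set A, Mmod' X Y Z bar v w I J =
      I ∪ (bar '' (X \ I) ∪ (J ∪ (bar '' (Y \ J) ∪ (Z ∪ (bar '' Z ∪ ({v, w} : Set A)))))) := by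
    intro I J; simp [Mmod', Set.union_assoc]
  have eqN : ∀ I J K : Set A, Nmod X Y Z bar v I J K =
      I ∪ (bar '' (X \ I) ∪ (J ∪ (bar '' (Y \ J) ∪ (K ∪ (bar '' (Z \ K) ∪ ({v} : Set A)))))) := by
    intro I J K; simp [Nmod, Set.union_assoc]
  -- R subset facts
  have hRM : (Z ∪ (bar '' Z ∪ ({u, v} : Set A))) ⊆ Z ∪ bar '' Z ∪ {u, v, w} := by
    intro a ha
    rcases ha with h | h | h
    · exact Or.inl (Or.inl h)
    · exact Or.inl (Or.inr h)
    · simp only [Set.mem_insert_iff, Set.mem_singleton_iff] at h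
      refine Or.inr ?_
      simp only [Set.mem_insert_iff, Set.mem_singleton_iff]
      tauto
  have hRM' : (Z ∪ (bar '' Z ∪ ({v, w} : Set A))) ⊆ Z ∪ bar '' Z ∪ {u, v, w} := by
    intro a ha
    rcases ha with h | h | h
    · exact Or.inl (Or.inl h)
    · exact Or.inl (Or.inr h)
    · simp only [Set.mem_insert_iff, Set.mem_singleton_iff] at h
      refine Or.inr ?_
      simp only [Set.mem_insert_iff, Set.mem_singleton_iff]
      tauto
  have hRN : ∀ {K : Set A}, K ⊆ Z → (K ∪ (bar '' (Z \ K) ∪ ({v} : Set A))) ⊆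
      Z ∪ bar '' Z ∪ {u, v, w} := by
    intro K hK a ha
    rcases ha with h | h | h
    · exact Or.inl (Or.inl (hK h))
    · exact Or.inl (Or.inr (Set.image_mono (f := bar) Set.diff_subset h))
    · simp only [Set.mem_singleton_iff] at h
      refine Or.inr ?_
      simp only [Set.mem_insert_iff, Set.mem_singleton_iff]
      tauto
  -- ## subset-of-U facts
  have hXsubU : X ⊆ Uall X Y Z bar u v w :=
    fun a ha => Or.inl (Or.inl (Or.inl (Or.inl (Or.inl (Or.inl ha)))))
  have hYsubU : Y ⊆ Uall X Y Z bar u v w :=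
    fun a ha => Or.inl (Or.inl (Or.inl (Or.inl (Or.inl (Or.inr ha)))))
  have hZsubU : Z ⊆ Uall X Y Z bar u v w :=
    fun a ha => Or.inl (Or.inl (Or.inl (Or.inl (Or.inr ha))))
  have hbXsubU : bar '' X ⊆ Uall X Y Z bar u v w :=
    fun a ha => Or.inl (Or.inl (Or.inl (Or.inr ha)))
  have hbYsubU : bar '' Y ⊆ Uall X Y Z bar u v w :=
    fun a ha => Or.inl (Or.inl (Or.inr ha))
  have hbZsubU : bar '' Z ⊆ Uall X Y Z bar u v w :=
    fun a ha => Or.inl (Or.inr ha)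
  have huvwsubU : ({u, v, w} : Set A) ⊆ Uall X Y Z bar u v w := fun a ha => Or.inr ha
  have hMsubU : ∀ I, I ⊆ X → ∀ J, J ⊆ Y →
      Mmod X Y Z bar u v I J ⊆ Uall X Y Z bar u v w := by
    intro I hI J hJ
    refine Set.union_subset (Set.union_subset (Set.union_subset (Set.union_subset
      (Set.union_subset (Set.union_subset ?_ ?_) ?_) ?_) ?_) ?_) ?_
    · exact hI.trans hXsubU
    · exact (Set.image_mono (f := bar) Set.diff_subset).trans hbXsubU
    · exact hJ.trans hYsubU
    · exact (Set.image_mono (f := bar) Set.diff_subset).trans hbYsubU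
    · exact hZsubU
    · exact hbZsubU
    · refine Set.Subset.trans ?_ huvwsubU
      intro a ha
      simp only [Set.mem_insert_iff, Set.mem_singleton_iff] at ha ⊢
      tauto
  have hM'subU : ∀ I, I ⊆ X → ∀ J, J ⊆ Y →
      Mmod' X Y Z bar v w I J ⊆ Uall X Y Z bar u v w := by
    intro I hI J hJ
    refine Set.union_subset (Set.union_subset (Set.union_subset (Set.union_subset
      (Set.union_subset (Set.union_subset ?_ ?_) ?_) ?_) ?_) ?_) ?_
    · exact hI.trans hXsubU
    · exact (Set.image_mono (f := bar) Set.diff_subset).trans hbXsubU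
    · exact hJ.trans hYsubU
    · exact (Set.image_mono (f := bar) Set.diff_subset).trans hbYsubU
    · exact hZsubU
    · exact hbZsubU
    · refine Set.Subset.trans ?_ huvwsubU
      intro a ha
      simp only [Set.mem_insert_iff, Set.mem_singleton_iff] at ha ⊢
      tauto
  -- classification of members of U
  have hUelim : ∀ {a : A}, a ∈ Uall X Y Z bar u v w →
      a ∈ X ∨ a ∈ Y ∨ a ∈ Z ∨ a ∈ bar '' X ∨ a ∈ bar '' Y ∨ a ∈ bar '' Z ∨
        a = u ∨ a = v ∨ a = w := by
    intro a ha
    rcases ha with ((((((h | h) | h) | h) | h) | h) | h)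
    · exact Or.inl h
    · exact Or.inr (Or.inl h)
    · exact Or.inr (Or.inr (Or.inl h))
    · exact Or.inr (Or.inr (Or.inr (Or.inl h)))
    · exact Or.inr (Or.inr (Or.inr (Or.inr (Or.inl h))))
    · exact Or.inr (Or.inr (Or.inr (Or.inr (Or.inr (Or.inl h)))))
    · simp only [Set.mem_insert_iff, Set.mem_singleton_iff] at h
      rcases h with h | h | h
      · exact Or.inr (Or.inr (Or.inr (Or.inr (Or.inr (Or.inr (Or.inl h))))))
      · exact Or.inr (Or.inr (Or.inr (Or.inr (Or.inr (Or.inr (Or.inr (Or.inl h)))))))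
      · exact Or.inr (Or.inr (Or.inr (Or.inr (Or.inr (Or.inr (Or.inr (Or.inr h)))))))
  -- ## conflict lemmas
  have cxM : ∀ I, I ⊆ X → ∀ J, J ⊆ Y → ∀ x ∈ X,
      x ∈ Mmod X Y Z bar u v I J → bar x ∈ Mmod X Y Z bar u v I J → False := by
    intro I hI J hJ x hx h1 h2
    rw [eqM] at h1 h2
    exact ((m2 hI hJ hRM hx).mp h2) ((m1 hI hJ hRM hx).mp h1)
  have cyM : ∀ I, I ⊆ X → ∀ J, J ⊆ Y → ∀ y ∈ Y,
      y ∈ Mmod X Y Z bar u v I J → bar y ∈ Mmod X Y Z bar u v I J → False := by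
    intro I hI J hJ y hy h1 h2
    rw [eqM] at h1 h2
    exact ((m4 hI hJ hRM hy).mp h2) ((m3 hI hJ hRM hy).mp h1)
  have cxM' : ∀ I, I ⊆ X → ∀ J, J ⊆ Y → ∀ x ∈ X,
      x ∈ Mmod' X Y Z bar v w I J → bar x ∈ Mmod' X Y Z bar v w I J → False := by
    intro I hI J hJ x hx h1 h2
    rw [eqM'] at h1 h2
    exact ((m2 hI hJ hRM' hx).mp h2) ((m1 hI hJ hRM' hx).mp h1)
  have cyM' : ∀ I, I ⊆ X → ∀ J, J ⊆ Y → ∀ y ∈ Y,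
      y ∈ Mmod' X Y Z bar v w I J → bar y ∈ Mmod' X Y Z bar v w I J → False := by
    intro I hI J hJ y hy h1 h2
    rw [eqM'] at h1 h2
    exact ((m4 hI hJ hRM' hy).mp h2) ((m3 hI hJ hRM' hy).mp h1)
  have cxN : ∀ I, I ⊆ X → ∀ J, J ⊆ Y → ∀ K, K ⊆ Z → ∀ x ∈ X,
      x ∈ Nmod X Y Z bar v I J K → bar x ∈ Nmod X Y Z bar v I J K → False := by
    intro I hI J hJ K hK x hx h1 h2
    rw [eqN] at h1 h2
    exact ((m2 hI hJ (hRN hK) hx).mp h2) ((m1 hI hJ (hRN hK) hx).mp h1)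
  have cyN : ∀ I, I ⊆ X → ∀ J, J ⊆ Y → ∀ K, K ⊆ Z → ∀ y ∈ Y,
      y ∈ Nmod X Y Z bar v I J K → bar y ∈ Nmod X Y Z bar v I J K → False := by
    intro I hI J hJ K hK y hy h1 h2
    rw [eqN] at h1 h2
    exact ((m4 hI hJ (hRN hK) hy).mp h2) ((m3 hI hJ (hRN hK) hy).mp h1)
  have cxO : ∀ I, I ⊆ X → ∀ x ∈ X,
      x ∈ Omod X bar I → bar x ∈ Omod X bar I → False := by
    intro I hI x hx h1 h2
    rcases h1 with h1 | h1
    · rcases h2 with h2 | h2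
      · exact hbF (hXin hx) (hXin (hI h2))
      · exact (hb_mem h2).2 h1
    · exact hbar_not (fun s hs => hXin hs.1) (hXin hx) h1
  have hyO : ∀ I, I ⊆ X → ∀ y ∈ Y, y ∉ Omod X bar I := by
    intro I hI y hy hmem
    rcases hmem with h | h
    · exact Set.disjoint_left.mp hXY (hI h) hy
    · exact hbar_not (fun s hs => hXin hs.1) (hYin hy) h
  have huO : ∀ I, I ⊆ X → u ∉ Omod X bar I := by
    intro I hI hmem
    rcases hmem with h | h
    · exact hu1 (hXin (hI h))
    · obtain ⟨b, hb, he⟩ := h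
      exact hu2 ⟨b, hXin hb.1, he⟩
  have hOsub : ∀ I, I ⊆ X → Omod X bar I ⊆ X ∪ bar '' X := by
    intro I hI
    exact Set.union_subset (fun a ha => Or.inl (hI ha))
      (fun a ha => Or.inr (Set.image_mono (f := bar) Set.diff_subset ha))
  have hwM : ∀ I, I ⊆ X → ∀ J, J ⊆ Y → w ∉ Mmod X Y Z bar u v I J := by
    intro I hI J hJ hmem
    rw [eqM] at hmem
    rcases (m5w hI hJ).mp hmem with h | h | h
    · exact hw1 (hZin h)
    · obtain ⟨z, hz, he⟩ := h
      exact hw2 ⟨z, hZin hz, he⟩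
    · simp only [Set.mem_insert_iff, Set.mem_singleton_iff] at h
      rcases h with rfl | rfl
      exacts [huw rfl, hvw rfl]
  have huM' : ∀ I, I ⊆ X → ∀ J, J ⊆ Y → u ∉ Mmod' X Y Z bar v w I J := by
    intro I hI J hJ hmem
    rw [eqM'] at hmem
    rcases (m5u hI hJ).mp hmem with h | h | h
    · exact hu1 (hZin h)
    · obtain ⟨z, hz, he⟩ := h
      exact hu2 ⟨z, hZin hz, he⟩
    · simp only [Set.mem_insert_iff, Set.mem_singleton_iff] at h
      rcases h with rfl | rfl
      exacts [huv rfl, huw rfl]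
  have huN : ∀ I, I ⊆ X → ∀ J, J ⊆ Y → ∀ K, K ⊆ Z → u ∉ Nmod X Y Z bar v I J K := by
    intro I hI J hJ K hK hmem
    rw [eqN] at hmem
    rcases (m5u hI hJ).mp hmem with h | h | h
    · exact hu1 (hZin (hK h))
    · obtain ⟨z, hz, he⟩ := h
      exact hu2 ⟨z, hZin hz.1, he⟩
    · simp only [Set.mem_singleton_iff] at h
      exact huv h
  have hwN : ∀ I, I ⊆ X → ∀ J, J ⊆ Y → ∀ K, K ⊆ Z → w ∉ Nmod X Y Z bar v I J K := by
    intro I hI J hJ K hK hmem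
    rw [eqN] at hmem
    rcases (m5w hI hJ).mp hmem with h | h | h
    · exact hw1 (hZin (hK h))
    · obtain ⟨z, hz, he⟩ := h
      exact hw2 ⟨z, hZin hz.1, he⟩
    · simp only [Set.mem_singleton_iff] at h
      exact hvw h.symm
  -- ## main lemma: for F ⊆ U there is an answer set inside U
  have main : ∀ F ⊆ Uall X Y Z bar u v w,
      ∃ M, M ⊆ Uall X Y Z bar u v w ∧ isAnswerSet (P ∪ factsOf F) M := by
    intro F hF
    have caseU : (∀ I, I ⊆ X → ∀ J, J ⊆ Y → ¬ F ⊆ Mmod X Y Z bar u v I J) →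
        (∀ I, I ⊆ X → ∀ J, J ⊆ Y → ¬ F ⊆ Mmod' X Y Z bar v w I J) →
        (∀ I, I ⊆ X → ¬ F ⊆ Omod X bar I) →
        (∀ I, I ⊆ X → ∀ J, J ⊆ Y → ∀ K, K ⊆ Z → ¬ F ⊆ Nmod X Y Z bar v I J K) →
        ∃ M, M ⊆ Uall X Y Z bar u v w ∧ isAnswerSet (P ∪ factsOf F) M := by
      intro nM nM' nO nN
      refine ⟨_, subset_refl _, answerSet_of _ _ _ hF ?_ ?_⟩
      · exact (hredU _ (subset_refl _)).mpr (Or.inl rfl)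
      · intro N hN hNmod hFN
        rcases (hredU N hN).mp hNmod with rfl |
          ⟨I, hI, J, hJ, (rfl | rfl | rfl | ⟨K, hK, -, rfl⟩)⟩
        · rfl
        · exact absurd hFN (nM I hI J hJ)
        · exact absurd hFN (nM' I hI J hJ)
        · exact absurd hFN (nO I hI)
        · exact absurd hFN (nN I hI J hJ K hK)
    by_cases hconX : ∀ x ∈ X, x ∈ F → bar x ∉ F
    · by_cases hsub : F ⊆ X ∪ bar '' X
      · -- case 2 : M'[F∩X, witness J]
        obtain ⟨Jw, hJwY, hJw⟩ := htrue (F ∩ X) Set.inter_subset_right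
        have hIX : F ∩ X ⊆ X := Set.inter_subset_right
        have hFM' : F ⊆ Mmod' X Y Z bar v w (F ∩ X) Jw := by
          intro a haF
          rw [eqM']
          rcases hsub haF with h | h
          · exact (m1 hIX hJwY hRM' h).mpr ⟨haF, h⟩
          · obtain ⟨x, hx, rfl⟩ := h
            refine (m2 hIX hJwY hRM' hx).mpr ?_
            rintro ⟨hxF, -⟩
            exact hconX x hx hxF haF
        refine ⟨_, hM'subU _ hIX _ hJwY, answerSet_of _ _ _ hFM' ?_ ?_⟩
        · exact (hredM' _ hIX _ hJwY _ (subset_refl _)).mpr (Or.inl rfl)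
        · intro N hN hNmod hFN
          rcases (hredM' _ hIX _ hJwY N hN).mp hNmod with rfl | ⟨K, hK, hnphi, rfl⟩
          · rfl
          · exact absurd (hJw K hK) hnphi
      · by_cases hconY : ∀ y ∈ Y, y ∈ F → bar y ∉ F
        · have hIX : F ∩ X ⊆ X := Set.inter_subset_right
          have hJY : F ∩ Y ⊆ Y := Set.inter_subset_right
          by_cases hw : w ∈ F
          · by_cases hu : u ∈ F
            · -- case 4 : u,w ∈ F
              refine caseU ?_ ?_ ?_ ?_
              · intro I hI J hJ hFT
                exact hwM I hI J hJ (hFT hw)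
              · intro I hI J hJ hFT
                exact huM' I hI J hJ (hFT hu)
              · intro I hI hFT
                exact huO I hI (hFT hu)
              · intro I hI J hJ K hK hFT
                exact huN I hI J hJ K hK (hFT hu)
            · -- case 3 : M'[F∩X, F∩Y], w ∈ F kills N-submodels
              have hFM' : F ⊆ Mmod' X Y Z bar v w (F ∩ X) (F ∩ Y) := by
                intro a haF
                rw [eqM']
                rcases hUelim (hF haF) with h | h | h | h | h | h | rfl | rfl | rfl
                · exact (m1 hIX hJY hRM' h).mpr ⟨haF, h⟩
                · exact (m3 hIX hJY hRM' h).mpr ⟨haF, h⟩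
                · exact (m5z hIX hJY h).mpr (Or.inl h)
                · obtain ⟨x, hx, rfl⟩ := h
                  refine (m2 hIX hJY hRM' hx).mpr ?_
                  rintro ⟨hxF, -⟩
                  exact hconX x hx hxF haF
                · obtain ⟨y, hy, rfl⟩ := h
                  refine (m4 hIX hJY hRM' hy).mpr ?_
                  rintro ⟨hyF, -⟩
                  exact hconY y hy hyF haF
                · obtain ⟨z, hz, rfl⟩ := h
                  exact (m5bz hIX hJY hz).mpr (Or.inr (Or.inl ⟨z, hz, rfl⟩))
                · exact absurd haF hu
                · exact (m5v hIX hJY).mpr (Or.inr (Or.inr (Or.inl rfl)))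
                · exact (m5w hIX hJY).mpr (Or.inr (Or.inr (Or.inr rfl)))
              refine ⟨_, hM'subU _ hIX _ hJY, answerSet_of _ _ _ hFM' ?_ ?_⟩
              · exact (hredM' _ hIX _ hJY _ (subset_refl _)).mpr (Or.inl rfl)
              · intro N hN hNmod hFN
                rcases (hredM' _ hIX _ hJY N hN).mp hNmod with rfl | ⟨K, hK, -, rfl⟩
                · rfl
                · exact absurd (hFN hw) (hwN _ hIX _ hJY K hK)
          · -- case 1 : M[F∩X, F∩Y]
            have hFM : F ⊆ Mmod X Y Z bar u v (F ∩ X) (F ∩ Y) := by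
              intro a haF
              rw [eqM]
              rcases hUelim (hF haF) with h | h | h | h | h | h | rfl | rfl | rfl
              · exact (m1 hIX hJY hRM h).mpr ⟨haF, h⟩
              · exact (m3 hIX hJY hRM h).mpr ⟨haF, h⟩
              · exact (m5z hIX hJY h).mpr (Or.inl h)
              · obtain ⟨x, hx, rfl⟩ := h
                refine (m2 hIX hJY hRM hx).mpr ?_
                rintro ⟨hxF, -⟩
                exact hconX x hx hxF haF
              · obtain ⟨y, hy, rfl⟩ := h
                refine (m4 hIX hJY hRM hy).mpr ?_
                rintro ⟨hyF, -⟩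
                exact hconY y hy hyF haF
              · obtain ⟨z, hz, rfl⟩ := h
                exact (m5bz hIX hJY hz).mpr (Or.inr (Or.inl ⟨z, hz, rfl⟩))
              · exact (m5u hIX hJY).mpr (Or.inr (Or.inr (Or.inl rfl)))
              · exact (m5v hIX hJY).mpr (Or.inr (Or.inr (Or.inr rfl)))
              · exact absurd haF hw
            refine ⟨_, hMsubU _ hIX _ hJY, answerSet_of _ _ _ hFM ?_ ?_⟩
            · exact (hredM _ hIX _ hJY _ (subset_refl _)).mpr (Or.inl rfl)
            · intro N hN hNmod hFN
              rcases (hredM _ hIX _ hJY N hN).mp hNmod with rfl | rfl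
              · rfl
              · exact absurd (fun a ha => hOsub _ hIX (hFN ha)) hsub
        · -- case 4 : Y-conflict
          push_neg at hconY
          obtain ⟨y, hy, hyF, hbyF⟩ := hconY
          refine caseU ?_ ?_ ?_ ?_
          · intro I hI J hJ hFT
            exact cyM I hI J hJ y hy (hFT hyF) (hFT hbyF)
          · intro I hI J hJ hFT
            exact cyM' I hI J hJ y hy (hFT hyF) (hFT hbyF)
          · intro I hI hFT
            exact hyO I hI y hy (hFT hyF)
          · intro I hI J hJ K hK hFT
            exact cyN I hI J hJ K hK y hy (hFT hyF) (hFT hbyF)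
    · -- case 4 : X-conflict
      push_neg at hconX
      obtain ⟨x, hx, hxF, hbxF⟩ := hconX
      refine caseU ?_ ?_ ?_ ?_
      · intro I hI J hJ hFT
        exact cxM I hI J hJ x hx (hFT hxF) (hFT hbxF)
      · intro I hI J hJ hFT
        exact cxM' I hI J hJ x hx (hFT hxF) (hFT hbxF)
      · intro I hI hFT
        exact cxO I hI x hx (hFT hxF) (hFT hbxF)
      · intro I hI J hJ K hK hFT
        exact cxN I hI J hJ K hK x hx (hFT hxF) (hFT hbxF)
  -- ## assemble the two goals
  have hPU : ∀ r ∈ P, r.head ⊆ Uall X Y Z bar u v w ∧ r.pos ⊆ Uall X Y Z bar u v w ∧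
      r.neg ⊆ Uall X Y Z bar u v w := by
    intro r hr
    refine ⟨?_, ?_, ?_⟩
    · intro a ha
      rw [← hatoms]
      exact Set.mem_biUnion hr (Or.inl (Or.inl ha))
    · intro a ha
      rw [← hatoms]
      exact Set.mem_biUnion hr (Or.inl (Or.inr ha))
    · intro a ha
      rw [← hatoms]
      exact Set.mem_biUnion hr (Or.inr ha)
  constructor
  · intro F hF
    obtain ⟨M, -, hAS⟩ := main F hF
    exact ⟨M, hAS⟩
  · intro F
    obtain ⟨M₀, hM₀U, hAS⟩ := main (F ∩ Uall X Y Z bar u v w) Set.inter_subset_right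
    obtain ⟨hm, hmin⟩ := hAS
    rw [reduct_union', reduct_facts'] at hm
    obtain ⟨hmP, hmF⟩ := isModel_union'.mp hm
    have hF0 : F ∩ Uall X Y Z bar u v w ⊆ M₀ := isModel_facts'.mp hmF
    have hred_eq : reduct P (M₀ ∪ (F \ Uall X Y Z bar u v w)) = reduct P M₀ := by
      ext r'
      constructor
      · rintro ⟨r, hr, hneg, rfl⟩
        refine ⟨r, hr, ?_, rfl⟩
        rw [Set.eq_empty_iff_forall_notMem] at hneg ⊢
        rintro a ⟨h1, h2⟩
        exact hneg a ⟨h1, Or.inl h2⟩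
      · rintro ⟨r, hr, hneg, rfl⟩
        refine ⟨r, hr, ?_, rfl⟩
        rw [Set.eq_empty_iff_forall_notMem] at hneg ⊢
        rintro a ⟨h1, h2 | h2⟩
        · exact hneg a ⟨h1, h2⟩
        · exact h2.2 ((hPU r hr).2.2 h1)
    refine ⟨M₀ ∪ (F \ Uall X Y Z bar u v w), ?_, ?_⟩
    · rw [reduct_union', reduct_facts', hred_eq]
      refine isModel_union'.mpr ⟨?_, isModel_facts'.mpr ?_⟩
      · rintro r' ⟨r, hr, hneg, rfl⟩ hpos -
        have hposM : r.pos ⊆ M₀ := by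
          intro a ha
          rcases hpos ha with h | h
          · exact h
          · exact absurd ((hPU r hr).2.1 ha) h.2
        obtain ⟨b, hb1, hb2⟩ := hmP _ ⟨r, hr, hneg, rfl⟩ hposM (Set.empty_inter _)
        exact ⟨b, hb1, Or.inl hb2⟩
      · intro a ha
        by_cases haU : a ∈ Uall X Y Z bar u v w
        · exact Or.inl (hF0 ⟨ha, haU⟩)
        · exact Or.inr ⟨ha, haU⟩
    · intro N hN hNmod
      rw [reduct_union', reduct_facts', hred_eq] at hNmod
      obtain ⟨hNP, hNF⟩ := isModel_union'.mp hNmod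
      have hFN : F ⊆ N := isModel_facts'.mp hNF
      have hN0sub : N ∩ Uall X Y Z bar u v w ⊆ M₀ := by
        rintro a ⟨h1, h2⟩
        rcases hN h1 with h | h
        · exact h
        · exact absurd h2 h.2
      have hN0mod : isModel (reduct (P ∪ factsOf (F ∩ Uall X Y Z bar u v w)) M₀)
          (N ∩ Uall X Y Z bar u v w) := by
        rw [reduct_union', reduct_facts']
        refine isModel_union'.mpr ⟨?_, isModel_facts'.mpr ?_⟩
        · rintro r' ⟨r, hr, hneg, rfl⟩ hpos -
          obtain ⟨b, hb1, hb2⟩ :=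
            hNP _ ⟨r, hr, hneg, rfl⟩ (fun a ha => (hpos ha).1) (Set.empty_inter _)
          exact ⟨b, hb1, hb2, (hPU r hr).1 hb1⟩
        · rintro a ⟨h1, h2⟩
          exact ⟨hFN h1, h2⟩
      have hNM := hmin (N ∩ Uall X Y Z bar u v w) hN0sub
      rw [reduct_union', reduct_facts'] at hNM
      have hNM' : N ∩ Uall X Y Z bar u v w = M₀ := by
        apply hNM
        rw [reduct_union', reduct_facts'] at hN0mod
        exact hN0mod
      refine Set.Subset.antisymm hN ?_
      rintro a (h | h)
      · rw [← hNM'] at h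
        exact h.1
      · exact hFN h.1
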